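/- For every positive integer n, Σ_{d | n, d < n} (2^d - 1) ≤ (2/3)·(2^n - 1). -/

import Mathlib

theorem proper_divisor_sum_bound (n : ℕ) (hn : 0 < n) :
    ∑ d ∈ n.properDivisors, ((2 : ℚ) ^ d - 1) ≤ (2 / 3) * ((2 : ℚ) ^ n - 1) := by
  match n, hn with
  | 1, _ => simp
  | 2, _ =>
    have : Nat.properDivisors 2 = {1} := by decide
    rw [this]; norm_num
  | (k + 3), _ =>
    set n := k + 3 with hn3
    have hm : n / 2 + 1 ≤ n - 1 := by omega
    have hsub : n.properDivisors ⊆ Finset.range (n / 2 + 1) := by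
      intro d hd
      rw [Nat.mem_properDivisors] at hd
      obtain ⟨⟨c, hc⟩, hdn⟩ := hd
      rw [Finset.mem_range]
      have hc2 : 2 ≤ c := by
        rcases Nat.lt_or_ge c 2 with h | h
        · interval_cases c <;> omega
        · exact h
      have : 2 * d ≤ n := by nlinarith
      omega
    calc ∑ d ∈ n.properDivisors, ((2 : ℚ) ^ d - 1)
        ≤ ∑ d ∈ n.properDivisors, (2 : ℚ) ^ d := by
          apply Finset.sum_le_sum; intro i _; linarith
      _ ≤ ∑ d ∈ Finset.range (n / 2 + 1), (2 : ℚ) ^ d := by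
          apply Finset.sum_le_sum_of_subset_of_nonneg hsub
          intro i _ _; positivity
      _ = (2 : ℚ) ^ (n / 2 + 1) - 1 := by
          rw [geom_sum_eq (by norm_num : (2:ℚ) ≠ 1)]; ring
      _ ≤ (2 : ℚ) ^ (n - 1) - 1 := by
          have := pow_le_pow_right₀ (by norm_num : (1:ℚ) ≤ 2) hm
          linarith
      _ ≤ (2 / 3) * ((2 : ℚ) ^ n - 1) := by
          have h1 : (2:ℚ) ^ n = 2 * 2 ^ (n - 1) := by
            rw [hn3]; norm_num [pow_succ]; ring
          have h2 : (1:ℚ) ≤ 2 ^ (n - 1) := one_le_pow₀ (by norm_num)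
          nlinarith [pow_pos (by norm_num : (0:ℚ) < 2) (n-1)]
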